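/- Let B be a canonical Blaschke product of degree 3 with zeros 0, a_1, a_2 in the open unit disk. If z_1 ≠ z_2 lie on the unit circle and B(z_1) = B(z_2), then the line through z_1 and z_2 is tangent to the ellipse E defined by |z - a_1| + |z - a_2| = |1 - conj(a_1) a_2|. -/

import Mathlib

open Complex

set_option maxHeartbeats 2000000 in
theorem blaschke_deg3_chord_tangent_ellipse (a₁ a₂ : ℂ)
    (ha₁ : ‖a₁‖ < 1) (ha₂ : ‖a₂‖ < 1)
    (B : ℂ → ℂ)
    (hB : ∀ z, B z = z * ((z - a₁) / (1 - (starRingEnd ℂ) a₁ * z)) *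
      ((z - a₂) / (1 - (starRingEnd ℂ) a₂ * z)))
    (z₁ z₂ : ℂ) (hz₁ : ‖z₁‖ = 1) (hz₂ : ‖z₂‖ = 1)
    (hne : z₁ ≠ z₂) (heq : B z₁ = B z₂)
    (L : Set ℂ) (hL : L = {z : ℂ | ∃ t : ℝ, z = (1 - (t : ℂ)) * z₁ + (t : ℂ) * z₂}) :
    (∃ w ∈ L, ‖w - a₁‖ + ‖w - a₂‖ =
        ‖1 - (starRingEnd ℂ) a₁ * a₂‖) ∧
    ∀ w ∈ L, ‖w - a₁‖ + ‖w - a₂‖ ≥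
        ‖1 - (starRingEnd ℂ) a₁ * a₂‖ := by
  set b₁ := (starRingEnd ℂ) a₁ with hb₁
  set b₂ := (starRingEnd ℂ) a₂ with hb₂
  set w₁ := (starRingEnd ℂ) z₁ with hw₁
  set w₂ := (starRingEnd ℂ) z₂ with hw₂
  have h1 : z₁ * w₁ = 1 := by
    rw [hw₁, Complex.mul_conj, Complex.normSq_eq_norm_sq, hz₁]; norm_num
  have h2 : z₂ * w₂ = 1 := by
    rw [hw₂, Complex.mul_conj, Complex.normSq_eq_norm_sq, hz₂]; norm_num
  have hw₁0 : w₁ ≠ 0 := by intro h; rw [h, mul_zero] at h1; exact one_ne_zero h1.symm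
  have hw₂0 : w₂ ≠ 0 := by intro h; rw [h, mul_zero] at h2; exact one_ne_zero h2.symm
  have hz₁0 : z₁ ≠ 0 := fun h => by rw [h] at hz₁; simp at hz₁
  have hz₂0 : z₂ ≠ 0 := fun h => by rw [h] at hz₂; simp at hz₂
  have hsub : z₂ - z₁ ≠ 0 := sub_ne_zero.mpr (Ne.symm hne)
  have hsub' : z₁ - z₂ ≠ 0 := sub_ne_zero.mpr hne
  have hden : ∀ a z : ℂ, ‖a‖ < 1 → ‖z‖ = 1 →
      1 - (starRingEnd ℂ) a * z ≠ 0 := by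
    intro a z ha hz h
    have h' : (starRingEnd ℂ) a * z = 1 := (sub_eq_zero.mp h).symm
    have habs : ‖(starRingEnd ℂ) a * z‖ = ‖a‖ := by
      rw [norm_mul, Complex.norm_conj, hz, mul_one]
    rw [h'] at habs; simp at habs; linarith
  have hd11 : 1 - b₁ * z₁ ≠ 0 := hden a₁ z₁ ha₁ hz₁
  have hd21 : 1 - b₂ * z₁ ≠ 0 := hden a₂ z₁ ha₂ hz₁
  have hd12 : 1 - b₁ * z₂ ≠ 0 := hden a₁ z₂ ha₁ hz₂
  have hd22 : 1 - b₂ * z₂ ≠ 0 := hden a₂ z₂ ha₂ hz₂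
  set μ := B z₁ with hμ
  set ν := (starRingEnd ℂ) μ with hν
  have E₁ : z₁ * (z₁ - a₁) * (z₁ - a₂) = μ * ((1 - b₁ * z₁) * (1 - b₂ * z₁)) := by
    rw [hμ, hB]
    have e1 : (z₁ - a₁) / (1 - b₁ * z₁) * (1 - b₁ * z₁) = z₁ - a₁ := div_mul_cancel₀ _ hd11
    have e2 : (z₁ - a₂) / (1 - b₂ * z₁) * (1 - b₂ * z₁) = z₁ - a₂ := div_mul_cancel₀ _ hd21
    linear_combination (-z₁ * ((z₁ - a₂) / (1 - b₂ * z₁) * (1 - b₂ * z₁))) * e1 + (-z₁ * (z₁ - a₁)) * e2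
  have E₂ : z₂ * (z₂ - a₁) * (z₂ - a₂) = μ * ((1 - b₁ * z₂) * (1 - b₂ * z₂)) := by
    rw [heq, hB]
    have e1 : (z₂ - a₁) / (1 - b₁ * z₂) * (1 - b₁ * z₂) = z₂ - a₁ := div_mul_cancel₀ _ hd12
    have e2 : (z₂ - a₂) / (1 - b₂ * z₂) * (1 - b₂ * z₂) = z₂ - a₂ := div_mul_cancel₀ _ hd22
    linear_combination (-z₂ * ((z₂ - a₂) / (1 - b₂ * z₂) * (1 - b₂ * z₂))) * e1 + (-z₂ * (z₂ - a₁)) * e2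
  have hw₁inv : w₁ = z₁⁻¹ := by field_simp; linear_combination h1
  have hw₂inv : w₂ = z₂⁻¹ := by field_simp; linear_combination h2
  have hcb₁ : (starRingEnd ℂ) b₁ = a₁ := by rw [hb₁, Complex.conj_conj]
  have hcb₂ : (starRingEnd ℂ) b₂ = a₂ := by rw [hb₂, Complex.conj_conj]
  have F₁ : (1 - b₁ * z₁) * (1 - b₂ * z₁) = ν * (z₁ * (z₁ - a₁) * (z₁ - a₂)) := by
    have cE₁ := congrArg (starRingEnd ℂ) E₁
    simp only [map_mul, map_sub, map_one, ← hw₁, ← hν, ← hb₁, ← hb₂] at cE₁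
    rw [hcb₁, hcb₂, hw₁inv] at cE₁
    field_simp at cE₁
    have h' : ((1 - b₁ * z₁) * (1 - b₂ * z₁) - ν * (z₁ * (z₁ - a₁) * (z₁ - a₂))) *
        (z₁ * z₁) = 0 := by linear_combination (z₁ * z₁) * cE₁
    rcases mul_eq_zero.mp h' with h'' | h''
    · exact sub_eq_zero.mp h''
    · exact absurd h'' (mul_ne_zero hz₁0 hz₁0)
  have F₂ : (1 - b₁ * z₂) * (1 - b₂ * z₂) = ν * (z₂ * (z₂ - a₁) * (z₂ - a₂)) := by
    have cE₂ := congrArg (starRingEnd ℂ) E₂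
    simp only [map_mul, map_sub, map_one, ← hw₂, ← hν, ← hb₁, ← hb₂] at cE₂
    rw [hcb₁, hcb₂, hw₂inv] at cE₂
    field_simp at cE₂
    have h' : ((1 - b₁ * z₂) * (1 - b₂ * z₂) - ν * (z₂ * (z₂ - a₁) * (z₂ - a₂))) *
        (z₂ * z₂) = 0 := by linear_combination (z₂ * z₂) * cE₂
    rcases mul_eq_zero.mp h' with h'' | h''
    · exact sub_eq_zero.mp h''
    · exact absurd h'' (mul_ne_zero hz₂0 hz₂0)
  have hmu : μ * ν = 1 := by
    have h : (μ * ν - 1) * ((1 - b₁ * z₁) * (1 - b₂ * z₁)) = 0 := by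
      linear_combination (-ν) * E₁ - F₁
    rcases mul_eq_zero.mp h with h' | h'
    · exact sub_eq_zero.mp h'
    · exact absurd h' (mul_ne_zero hd11 hd21)
  have hstar : μ * (b₁ * b₂ * (z₁ + z₂) - b₁ - b₂) =
      (z₁ + z₂) ^ 2 - z₁ * z₂ - (a₁ + a₂) * (z₁ + z₂) + a₁ * a₂ := by
    have h : (z₁ - z₂) * (μ * (b₁ * b₂ * (z₁ + z₂) - b₁ - b₂) -
        ((z₁ + z₂) ^ 2 - z₁ * z₂ - (a₁ + a₂) * (z₁ + z₂) + a₁ * a₂)) = 0 := by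
      linear_combination E₂ - E₁
    rcases mul_eq_zero.mp h with h' | h'
    · exact absurd h' hsub'
    · exact sub_eq_zero.mp h'
  have hstarF : b₁ * b₂ * (z₁ + z₂) - b₁ - b₂ =
      ν * ((z₁ + z₂) ^ 2 - z₁ * z₂ - (a₁ + a₂) * (z₁ + z₂) + a₁ * a₂) := by
    have h : (z₁ - z₂) * ((b₁ * b₂ * (z₁ + z₂) - b₁ - b₂) -
        ν * ((z₁ + z₂) ^ 2 - z₁ * z₂ - (a₁ + a₂) * (z₁ + z₂) + a₁ * a₂)) = 0 := by
      linear_combination F₁ - F₂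
    rcases mul_eq_zero.mp h with h' | h'
    · exact absurd h' hsub'
    · exact sub_eq_zero.mp h'
  have hdiam : μ * (1 - b₁ * b₂ * (z₁ * z₂)) = (a₁ + a₂ - (z₁ + z₂)) * (z₁ * z₂) := by
    linear_combination (-z₁) * hstar - E₁
  have hdiamF : b₁ * b₂ * (z₁ * z₂) - 1 = ν * ((z₁ + z₂) - a₁ - a₂) * (z₁ * z₂) := by
    linear_combination z₁ * hstarF - F₁
  -- KEY algebraic identity (z-variable form)
  have hT : (z₁ + z₂ - b₁ * (z₁ * z₂) - a₂) * (z₁ + z₂ - a₁ - b₂ * (z₁ * z₂)) =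
      (z₁ * z₂) * ((1 - b₁ * a₂) * (1 - a₁ * b₂)) := by
    linear_combination
      ((z₁ + z₂) * (z₁ * z₂) - (a₁ + a₂) * ν * μ * (z₁ * z₂)) * hstarF +
      (-((z₁ + z₂) ^ 2 - z₁ * z₂) + (a₁ + a₂) * ν * μ * (z₁ + z₂)) * hdiamF +
      a₁ * a₂ * ν * hdiam +
      ((a₁ + a₂) * ν * ((z₁ * z₂) ^ 2 - a₁ * a₂ * (z₁ * z₂)) -
        (a₁ * a₂ * (1 - b₁ * b₂ * (z₁ * z₂)) +
         (a₁ + a₂) * ((b₁ + b₂) * (z₁ * z₂) - (z₁ + z₂)))) * hmu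
  -- translate to |f₁' - a₂| = |1 - b₁ a₂| where f₁' = z₁ + z₂ - z₁ z₂ b₁
  set X := z₁ + z₂ - b₁ * (z₁ * z₂) - a₂ with hX
  have hcX : (starRingEnd ℂ) X = w₁ + w₂ - a₁ * (w₁ * w₂) - b₂ := by
    rw [hX]; simp only [map_add, map_sub, map_mul, ← hw₁, ← hw₂, ← hb₂]
    try rw [hcb₁]
    try ring
  have hXY : X * (starRingEnd ℂ) X = (1 - b₁ * a₂) * (1 - a₁ * b₂) := by
    have h : (X * ((starRingEnd ℂ) X) - (1 - b₁ * a₂) * (1 - a₁ * b₂)) * (z₁ * z₂) = 0 := by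
      rw [hcX]
      linear_combination hT + X * (z₂ - a₁ * z₂ * w₂) * h1 + X * (z₁ - a₁) * h2
    rcases mul_eq_zero.mp h with h' | h'
    · exact sub_eq_zero.mp h'
    · exact absurd h' (mul_ne_zero hz₁0 hz₂0)
  have habs_key : ‖X‖ = ‖1 - b₁ * a₂‖ := by
    have hc : (starRingEnd ℂ) (1 - b₁ * a₂) = 1 - a₁ * b₂ := by
      simp only [map_sub, map_mul, map_one, ← hb₂]
      try rw [hcb₁]
      try ring
    have h : (Complex.normSq X : ℂ) = (Complex.normSq (1 - b₁ * a₂) : ℂ) := by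
      rw [← Complex.mul_conj, ← Complex.mul_conj, hXY, hc]
    have h' : Complex.normSq X = Complex.normSq (1 - b₁ * a₂) := by exact_mod_cast h
    rw [Complex.norm_def, Complex.norm_def, h']
  -- strict inequality |a₁ - a₂| < |1 - b₁ a₂|
  have habs_lt : ‖a₁ - a₂‖ < ‖1 - b₁ * a₂‖ := by
    have hc : (starRingEnd ℂ) (1 - b₁ * a₂) = 1 - a₁ * b₂ := by
      simp only [map_sub, map_mul, map_one, ← hb₂]
      try rw [hcb₁]
      try ring
    have hid : (1 - b₁ * a₂) * (starRingEnd ℂ) (1 - b₁ * a₂) =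
        (a₁ - a₂) * (starRingEnd ℂ) (a₁ - a₂) +
        (1 - a₁ * (starRingEnd ℂ) a₁) * (1 - a₂ * (starRingEnd ℂ) a₂) := by
      rw [hc]; simp only [map_sub, ← hb₁, ← hb₂]; ring
    rw [Complex.mul_conj, Complex.mul_conj, Complex.mul_conj, Complex.mul_conj] at hid
    have hid' : Complex.normSq (1 - b₁ * a₂) =
        Complex.normSq (a₁ - a₂) + (1 - Complex.normSq a₁) * (1 - Complex.normSq a₂) := by
      exact_mod_cast hid
    have hn₁ : Complex.normSq a₁ < 1 := by
      rw [Complex.normSq_eq_norm_sq]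
      calc ‖a₁‖ ^ 2 ≤ ‖a₁‖ := by
            nlinarith [norm_nonneg a₁]
        _ < 1 := ha₁
    have hn₂ : Complex.normSq a₂ < 1 := by
      rw [Complex.normSq_eq_norm_sq]
      calc ‖a₂‖ ^ 2 ≤ ‖a₂‖ := by
            nlinarith [norm_nonneg a₂]
        _ < 1 := ha₂
    have hlt : Complex.normSq (a₁ - a₂) < Complex.normSq (1 - b₁ * a₂) := by
      nlinarith [hid']
    rw [Complex.norm_def, Complex.norm_def]
    exact Real.sqrt_lt_sqrt (Complex.normSq_nonneg _) hlt
  -- membership criterion: fixed points of the reflection lie on L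
  have hLmem : ∀ w : ℂ, z₁ + z₂ - z₁ * z₂ * ((starRingEnd ℂ) w) = w → w ∈ L := by
    intro w hr
    have hcw : (starRingEnd ℂ) w = w₁ + w₂ - w₁ * w₂ * w := by
      linear_combination (-(w₁ * w₂)) * hr + (w₂ - (starRingEnd ℂ) w * z₂ * w₂) * h1 +
        (w₁ - (starRingEnd ℂ) w) * h2
    set u := (w - z₁) / (z₂ - z₁) with hu
    have hureal : (starRingEnd ℂ) u = u := by
      have hwne : w₂ - w₁ ≠ 0 := by
        intro h
        apply hne
        have h' : w₁ = w₂ := (sub_eq_zero.mp h).symm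
        have h'' := congrArg (starRingEnd ℂ) h'
        rw [hw₁, hw₂, Complex.conj_conj, Complex.conj_conj] at h''
        exact h''
      rw [hu, map_div₀, map_sub, map_sub, ← hw₁, ← hw₂]
      rw [div_eq_div_iff hwne hsub]
      linear_combination (z₂ - z₁) * hcw + (w * w₂ - 1) * h1 + (1 - w * w₁) * h2
    have hue : ((u.re : ℂ)) = u := Complex.conj_eq_iff_re.mp hureal
    rw [hL]
    refine ⟨u.re, ?_⟩
    have hw' : w = z₁ + u * (z₂ - z₁) := by
      rw [hu]; field_simp; ring
    rw [hw', hue]; ring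
  -- line points are fixed by the reflection
  have hLfix : ∀ t : ℝ, z₁ + z₂ - z₁ * z₂ * ((starRingEnd ℂ) ((1 - (t : ℂ)) * z₁ + (t : ℂ) * z₂))
      = (1 - (t : ℂ)) * z₁ + (t : ℂ) * z₂ := by
    intro t
    have hct : (starRingEnd ℂ) ((1 - (t : ℂ)) * z₁ + (t : ℂ) * z₂) =
        (1 - (t : ℂ)) * w₁ + (t : ℂ) * w₂ := by
      simp only [map_add, map_mul, map_sub, map_one, Complex.conj_ofReal, ← hw₁, ← hw₂]
    rw [hct]
    linear_combination (-(1 - (t : ℂ)) * z₂) * h1 + (-(t : ℂ) * z₁) * h2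
  -- reflection distance identity on L
  set f := z₁ + z₂ - b₁ * (z₁ * z₂) with hf
  have hrefl : ∀ w : ℂ, z₁ + z₂ - z₁ * z₂ * ((starRingEnd ℂ) w) = w →
      ‖w - f‖ = ‖w - a₁‖ := by
    intro w hr
    have h : w - f = z₁ * z₂ * ((starRingEnd ℂ) (a₁ - w)) := by
      rw [map_sub, ← hb₁]
      linear_combination -hr
    rw [h, norm_mul, norm_mul, hz₁, hz₂, Complex.norm_conj, one_mul, one_mul,
      norm_sub_rev]
  -- PART 2
  have part2 : ∀ w ∈ L, ‖w - a₁‖ + ‖w - a₂‖ ≥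
      ‖1 - b₁ * a₂‖ := by
    intro w hw
    rw [hL] at hw
    obtain ⟨t, rfl⟩ := hw
    have hfix := hLfix t
    have h₁ := hrefl _ hfix
    set w := (1 - (t : ℂ)) * z₁ + (t : ℂ) * z₂
    calc ‖w - a₁‖ + ‖w - a₂‖
        = ‖w - f‖ + ‖w - a₂‖ := by rw [h₁]
      _ = ‖f - w‖ + ‖w - a₂‖ := by rw [norm_sub_rev]
      _ ≥ ‖f - a₂‖ := by
          have := norm_sub_le_norm_sub_add_norm_sub f w a₂
          linarith
      _ = ‖X‖ := by
          congr 1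
      _ = ‖1 - b₁ * a₂‖ := habs_key
  refine ⟨?_, part2⟩
  -- PART 1 : existence of tangency point
  -- u₁ = f - a₁ (normal displacement of a₁), u₂ = r(a₂) - a₂
  set u₁ := z₁ + z₂ - z₁ * z₂ * b₁ - a₁ with hu₁
  set u₂ := z₁ + z₂ - z₁ * z₂ * b₂ - a₂ with hu₂
  have hu₁0 : u₁ ≠ 0 := by
    intro h0
    have ha₁L : a₁ ∈ L := by
      apply hLmem
      rw [hu₁] at h0
      rw [← hb₁]
      linear_combination h0
    have := part2 a₁ ha₁L
    rw [sub_self, norm_zero, zero_add] at this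
    linarith [habs_lt]
  have hcu₁ : (starRingEnd ℂ) u₁ = w₁ * w₂ * u₁ := by
    rw [hu₁]
    simp only [map_add, map_sub, map_mul, ← hw₁, ← hw₂, ← hb₁]
    rw [hcb₁]
    linear_combination (b₁ * z₂ * w₂ - w₂) * h1 + (b₁ - w₁) * h2
  have hcu₂ : (starRingEnd ℂ) u₂ = w₁ * w₂ * u₂ := by
    rw [hu₂]
    simp only [map_add, map_sub, map_mul, ← hw₁, ← hw₂, ← hb₂]
    rw [hcb₂]
    linear_combination (b₂ * z₂ * w₂ - w₂) * h1 + (b₂ - w₁) * h2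
  set ρ := u₂ / u₁ with hρ
  have hρreal : (starRingEnd ℂ) ρ = ρ := by
    rw [hρ, map_div₀, hcu₁, hcu₂]
    exact mul_div_mul_left u₂ u₁ (mul_ne_zero hw₁0 hw₂0)
  have hρe : ((ρ.re : ℂ)) = ρ := Complex.conj_eq_iff_re.mp hρreal
  set c := ρ.re with hc
  by_cases hcase : 0 ≤ c
  · -- tangency point on segment [f, a₂]
    set t : ℝ := 1 / (1 + c) with ht
    have h1c : (0:ℝ) < 1 + c := by linarith
    have ht0 : 0 ≤ t := by positivity
    have ht1 : t ≤ 1 := by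
      rw [ht]; rw [div_le_one h1c]; linarith
    set w₀ := (1 - (t : ℂ)) * f + (t : ℂ) * a₂ with hw₀
    have hcomb : z₁ + z₂ - z₁ * z₂ * ((starRingEnd ℂ) w₀) - w₀ =
        -(1 - (t : ℂ)) * u₁ + (t : ℂ) * u₂ := by
      rw [hw₀, hf]
      simp only [map_add, map_sub, map_mul, map_one, Complex.conj_ofReal,
        ← hw₁, ← hw₂, ← hb₂]
      rw [hcb₁]
      linear_combination (1 - (t : ℂ)) * (-z₂ + a₁ * z₂ * w₂) * h1 +
        (1 - (t : ℂ)) * (-z₁ + a₁) * h2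
    have hcρ : ((c : ℝ) : ℂ) = ρ := by rw [hc]; exact hρe
    have hu₂e : u₂ = ρ * u₁ := (div_mul_cancel₀ u₂ hu₁0).symm
    have hzero : -(1 - (t : ℂ)) * u₁ + (t : ℂ) * u₂ = 0 := by
      have hreal : 1 - t - t * c = 0 := by
        rw [ht]; field_simp; ring
      have hre : (1 : ℂ) - (t : ℂ) - (t : ℂ) * ((c : ℝ) : ℂ) = 0 := by
        exact_mod_cast hreal
      rw [hu₂e, ← hcρ]
      linear_combination (-u₁) * hre
    have hw₀fix : z₁ + z₂ - z₁ * z₂ * ((starRingEnd ℂ) w₀) = w₀ :=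
      sub_eq_zero.mp (hcomb.trans hzero)
    have hw₀L : w₀ ∈ L := hLmem w₀ hw₀fix
    refine ⟨w₀, hw₀L, ?_⟩
    have hra : ‖w₀ - a₁‖ = ‖w₀ - f‖ := (hrefl w₀ hw₀fix).symm
    have e1 : w₀ - f = (t : ℂ) * (a₂ - f) := by rw [hw₀]; ring
    have e2 : w₀ - a₂ = (1 - (t : ℂ)) * (f - a₂) := by rw [hw₀]; ring
    have e3 : (1 : ℂ) - (t : ℂ) = ((1 - t : ℝ) : ℂ) := by push_cast; ring
    have e5 : ‖f - a₂‖ = ‖1 - b₁ * a₂‖ := by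
      rw [← habs_key]
    have habs1 : ‖w₀ - f‖ = t * ‖f - a₂‖ := by
      rw [e1, norm_mul, Complex.norm_real, Real.norm_eq_abs, _root_.abs_of_nonneg ht0, norm_sub_rev a₂ f]
    have habs2 : ‖w₀ - a₂‖ = (1 - t) * ‖f - a₂‖ := by
      rw [e2, e3, norm_mul, Complex.norm_real, Real.norm_eq_abs,
        _root_.abs_of_nonneg (by linarith : (0:ℝ) ≤ 1 - t)]
    rw [hra, habs1, habs2, e5]
    ring
  · -- a₁, a₂ on opposite sides: impossible
    exfalso
    push_neg at hcase
    set t : ℝ := 1 / (1 - c) with ht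
    have h1c : (0:ℝ) < 1 - c := by linarith
    have ht0 : 0 ≤ t := by positivity
    have ht1 : t ≤ 1 := by rw [ht, div_le_one h1c]; linarith
    set w' := (1 - (t : ℂ)) * a₁ + (t : ℂ) * a₂ with hw'
    have hcomb' : z₁ + z₂ - z₁ * z₂ * ((starRingEnd ℂ) w') - w' =
        (1 - (t : ℂ)) * u₁ + (t : ℂ) * u₂ := by
      rw [hw', hu₁, hu₂]
      simp only [map_add, map_sub, map_mul, map_one, Complex.conj_ofReal, ← hb₁, ← hb₂]
      ring
    have hcρ : ((c : ℝ) : ℂ) = ρ := by rw [hc]; exact hρe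
    have hu₂e : u₂ = ρ * u₁ := (div_mul_cancel₀ u₂ hu₁0).symm
    have hzero' : (1 - (t : ℂ)) * u₁ + (t : ℂ) * u₂ = 0 := by
      have hreal : 1 - t + t * c = 0 := by
        rw [ht]; field_simp; ring
      have hre : (1 : ℂ) - (t : ℂ) + (t : ℂ) * ((c : ℝ) : ℂ) = 0 := by
        exact_mod_cast hreal
      rw [hu₂e, ← hcρ]
      linear_combination u₁ * hre
    have hw'fix : z₁ + z₂ - z₁ * z₂ * ((starRingEnd ℂ) w') = w' :=
      sub_eq_zero.mp (hcomb'.trans hzero')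
    have hw'L : w' ∈ L := hLmem w' hw'fix
    have hge := part2 w' hw'L
    have e1 : w' - a₁ = (t : ℂ) * (a₂ - a₁) := by rw [hw']; ring
    have e2 : w' - a₂ = (1 - (t : ℂ)) * (a₁ - a₂) := by rw [hw']; ring
    have e3 : (1 : ℂ) - (t : ℂ) = ((1 - t : ℝ) : ℂ) := by push_cast; ring
    have habs1 : ‖w' - a₁‖ = t * ‖a₁ - a₂‖ := by
      rw [e1, norm_mul, Complex.norm_real, Real.norm_eq_abs, _root_.abs_of_nonneg ht0, norm_sub_rev a₂ a₁]
    have habs2 : ‖w' - a₂‖ = (1 - t) * ‖a₁ - a₂‖ := by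
      rw [e2, e3, norm_mul, Complex.norm_real, Real.norm_eq_abs,
        _root_.abs_of_nonneg (by linarith : (0:ℝ) ≤ 1 - t)]
    rw [habs1, habs2] at hge
    have : ‖a₁ - a₂‖ ≥ ‖1 - b₁ * a₂‖ := by
      calc ‖1 - b₁ * a₂‖ ≤ t * ‖a₁ - a₂‖ +
            (1 - t) * ‖a₁ - a₂‖ := hge
        _ = ‖a₁ - a₂‖ := by ring
    linarith [habs_lt]
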